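/- Let (R, m) be an approximately Gorenstein Noetherian local ring with a sequence {I_t} of m-primary irreducible ideals cofinal with the powers of m such that there are injections R/I_t → R/I_{t+1} sending the socle generator to the socle generator; let u_t ∈ R represent a socle generator of R/I_t. If M is a finitely generated R-module with no nonzero free direct summand, then there exists t_0 > 0 such that u_t M ⊆ I_t M for all t ≥ t_0. -/

import Mathlib

open Filter IsLocalRing

universe u

section FrobeniusTwist

/-- For a ring `R` of prime characteristic `p`, `FrobTwist R p e` is the ring `R^{1/p^e}` of
`p^e`-th roots of elements of `R`, realized as the ring `R` itself, viewed as an `R`-algebra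
via the `e`-th iterate of the Frobenius endomorphism (so `r • x = r^{p^e} * x`). -/
def FrobTwist (R : Type u) [CommRing R] (p e : ℕ) : Type u := R

variable (R : Type u) [CommRing R] (p : ℕ) [Fact p.Prime] [CharP R p]

instance (e : ℕ) : CommRing (FrobTwist R p e) := inferInstanceAs (CommRing R)

/-- The identity map of `R`, viewed as a map `R → R^{1/p^e}` (sending `r` to `r`,
i.e. to `(r^{p^e})^{1/p^e}`). -/
def FrobTwist.of (e : ℕ) : R →+* FrobTwist R p e := RingHom.id R

instance (e : ℕ) : Module R (FrobTwist R p e) :=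
  Module.compHom (FrobTwist R p e) ((FrobTwist.of R p e).comp (iterateFrobenius R p e))

/-- `R` is `F`-finite: `R^{1/p}` is a finitely generated `R`-module. -/
def FFinite : Prop := Module.Finite R (FrobTwist R p 1)

end FrobeniusTwist

section Summands

variable (R : Type u) [CommRing R]

/-- An `R`-module `M` has no nonzero free direct summand. (For a finitely generated module over a
local ring this is equivalent to the nonexistence of a surjective linear map `M → R`.) -/
def NoFreeSummand (M : Type u) [AddCommGroup M] [Module R M] : Prop :=
  ¬ ∃ f : M →ₗ[R] R, Function.Surjective f

variable (p : ℕ) [Fact p.Prime] [CharP R p]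

/-- `a` is the number of `R`-free direct summands in a direct sum decomposition
`R^{1/p^e} ≅ R^a ⊕ M` where `M` has no nonzero free direct summand. -/
def IsFreeSummandCount (e a : ℕ) : Prop :=
  ∃ (M : Type u) (_ : AddCommGroup M) (_ : Module R M),
    NoFreeSummand R M ∧ Nonempty (FrobTwist R p e ≃ₗ[R] ((Fin a → R) × M))

/-- `R` is strongly `F`-regular: for every `c` not in any minimal prime, the inclusion
`R·c^{1/q} ⊆ R^{1/q}` of `R`-modules splits for all `q = p^e` large. -/
def StronglyFRegular : Prop :=
  ∀ c : R, (∀ P ∈ minimalPrimes R, c ∉ P) →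
    ∃ e₀ : ℕ, ∀ e ≥ e₀, ∃ g : FrobTwist R p e →ₗ[R] R, g (FrobTwist.of R p e c) = 1

end Summands

section CharPInstances

theorem charP_of_ringHom_of_prime {R S : Type*} [CommRing R] [CommRing S] [Nontrivial S]
    (f : R →+* S) (p : ℕ) [hp : Fact p.Prime] [CharP R p] : CharP S p := by
  have hp0 : (p : S) = 0 := by
    rw [← map_natCast f p, CharP.cast_eq_zero R p, map_zero]
  refine ringChar.of_eq (Or.resolve_left ((Nat.dvd_prime hp.1).1 (ringChar.dvd hp0)) fun h1 => ?_)
  haveI := ringChar.of_eq h1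
  haveI := CharP.CharOne.subsingleton (R := S)
  exact one_ne_zero (α := S) (Subsingleton.elim _ _)

instance (R : Type u) [CommRing R] [IsLocalRing R] (p : ℕ) [Fact p.Prime] [CharP R p] :
    CharP (ResidueField R) p :=
  charP_of_ringHom_of_prime (residue R) p

instance (R : Type u) [CommRing R] (P : Ideal R) [P.IsPrime] (p : ℕ) [Fact p.Prime] [CharP R p] :
    CharP (Localization.AtPrime P) p :=
  charP_of_ringHom_of_prime (algebraMap R (Localization.AtPrime P)) p

end CharPInstances




section Length

/-- The length of an `R`-module `M`, as an element of `ℕ∞`: the supremum of lengths of chains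
of submodules of `M`. -/
noncomputable def moduleLength (R M : Type*) [Ring R] [AddCommGroup M] [Module R M] : ℕ∞ :=
  (Order.krullDim (Submodule R M)).unbotD 0

end Length

section FrobPow

/-- The `q = p^e`-th Frobenius power `I^{[q]}` of an ideal `I`: the ideal generated by the
`p^e`-th powers of the elements of `I`. -/
def Ideal.frobPow {R : Type*} [CommRing R] (p e : ℕ) (I : Ideal R) : Ideal R :=
  Ideal.span ((· ^ p ^ e) '' (I : Set R))

end FrobPow

section Excellent

/-- An ideal is irreducible if it is not the intersection of two ideals strictly containing it;
equivalently, whenever it is written as an intersection of two ideals, it equals one of them. -/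
def IsIrreducibleIdeal {A : Type*} [CommRing A] (I : Ideal A) : Prop :=
  ∀ J K : Ideal A, I = J ⊓ K → I = J ∨ I = K

/-- A ring is catenary if any two saturated chains of prime ideals with the same endpoints
have the same length. -/
def Ring.IsCatenary (A : Type*) [CommRing A] : Prop :=
  ∀ c₁ c₂ : LTSeries (PrimeSpectrum A), c₁.head = c₂.head → c₁.last = c₂.last →
    (∀ i : Fin c₁.length, c₁.toFun i.castSucc ⋖ c₁.toFun i.succ) →
    (∀ i : Fin c₂.length, c₂.toFun i.castSucc ⋖ c₂.toFun i.succ) →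
    c₁.length = c₂.length

/-- A (commutative, Noetherian) ring is regular local if it is a Noetherian local ring whose
maximal ideal (= the ideal of nonunits) is generated by `dim A` elements. -/
def IsRegularLocalRing' (A : Type u) [CommRing A] : Prop :=
  IsNoetherianRing A ∧
    ∃ s : Finset A, (∀ x : A, x ∈ Ideal.span (s : Set A) ↔ x ∈ nonunits A) ∧
      (s.card : WithBot ℕ∞) = ringKrullDim A

/-- A ring is regular if it is Noetherian and all its localizations at primes are regular local
rings. -/
def IsRegularRing' (A : Type u) [CommRing A] : Prop :=
  IsNoetherianRing A ∧
    ∀ P : PrimeSpectrum A, IsRegularLocalRing' (Localization.AtPrime P.asIdeal)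

/-- An algebra `A` over a field `k` is geometrically regular if `L ⊗[k] A` is a regular ring
for every finite field extension `L` of `k`. -/
def Algebra.IsGeometricallyRegular (k A : Type u) [Field k] [CommRing A] [Algebra k A] : Prop :=
  ∀ (L : Type u) [Field L] [Algebra k L], Module.Finite k L →
    IsRegularRing' (TensorProduct k L A)

/-- The residue field `k(P)` of a prime `P`. -/
noncomputable abbrev primeResidueField {R : Type u} [CommRing R] (P : Ideal R) [P.IsPrime] :
    Type u :=
  ResidueField (Localization.AtPrime P)

/-- A Noetherian local ring is excellent if it is universally catenary, its formal fibers (the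
fibers of the map to its completion) are geometrically regular, and every finitely generated
algebra over it has open regular locus (the J-2 condition). -/
def IsExcellentLocalRing (R : Type u) [CommRing R] [IsLocalRing R] : Prop :=
  IsNoetherianRing R ∧
  (∀ (B : Type u) [CommRing B] [Algebra R B], Algebra.FiniteType R B → Ring.IsCatenary B) ∧
  (∀ (P : Ideal R) (hP : P.IsPrime),
    Algebra.IsGeometricallyRegular (primeResidueField P)
      (TensorProduct R (primeResidueField P) (AdicCompletion (maximalIdeal R) R))) ∧
  (∀ (B : Type u) [CommRing B] [Algebra R B], Algebra.FiniteType R B →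
    IsOpen {Q : PrimeSpectrum B | IsRegularLocalRing' (Localization.AtPrime Q.asIdeal)})

end Excellent

section CM

/-- A local ring is Cohen–Macaulay if some system of parameters (a family of `dim R` elements
generating an ideal whose radical is the maximal ideal) is a regular sequence. -/
def IsCohenMacaulayLocalRing (A : Type u) [CommRing A] [IsLocalRing A] : Prop :=
  ∃ xs : List A, RingTheory.Sequence.IsRegular A xs ∧
    (Ideal.ofList xs).radical = maximalIdeal A ∧
    (xs.length : WithBot ℕ∞) = ringKrullDim A

/-- A local ring is Gorenstein if it is Cohen–Macaulay and some system of parameters generates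
an irreducible ideal. -/
def IsGorensteinLocalRing (A : Type u) [CommRing A] [IsLocalRing A] : Prop :=
  ∃ xs : List A, RingTheory.Sequence.IsRegular A xs ∧
    (Ideal.ofList xs).radical = maximalIdeal A ∧
    (xs.length : WithBot ℕ∞) = ringKrullDim A ∧
    IsIrreducibleIdeal (Ideal.ofList xs)

/-- A Noetherian local ring is approximately Gorenstein if there is a sequence of `m`-primary
irreducible ideals cofinal with the powers of the maximal ideal. -/
def IsApproximatelyGorenstein (R : Type u) [CommRing R] [IsLocalRing R] : Prop :=
  ∃ I : ℕ → Ideal R,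
    (∀ t, (I t).radical = maximalIdeal R ∧ IsIrreducibleIdeal (I t)) ∧
    ∀ n : ℕ, ∃ t₀, ∀ t ≥ t₀, I t ≤ maximalIdeal R ^ n

end CM

section TightClosure

/-- `x` lies in the tight closure of the ideal `I`: there is `c` not in any minimal prime with
`c x^q ∈ I^{[q]}` for all large `q = p^e`. -/
def Ideal.memTightClosure {R : Type u} [CommRing R] (p : ℕ) (I : Ideal R) (x : R) : Prop :=
  ∃ c : R, (∀ P ∈ minimalPrimes R, c ∉ P) ∧
    ∃ e₀ : ℕ, ∀ e ≥ e₀, c * x ^ p ^ e ∈ I.frobPow p e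

/-- `R` is weakly `F`-regular: every ideal is tightly closed. -/
def WeaklyFRegular (R : Type u) [CommRing R] (p : ℕ) : Prop :=
  ∀ (I : Ideal R) (x : R), I.memTightClosure p x → x ∈ I

end TightClosure

section Hull

/-- `ι : K →ₗ[R] E` exhibits `E` as an injective hull of `K`: `E` is injective and `ι` is an
injective map with essential image. -/
def IsInjectiveHull (R : Type u) [CommRing R] {K E : Type u}
    [AddCommGroup K] [Module R K] [AddCommGroup E] [Module R E] (ι : K →ₗ[R] E) : Prop :=
  Module.Injective R E ∧ Function.Injective ι ∧
    ∀ N : Submodule R E, N ≠ ⊥ → N ⊓ LinearMap.range ι ≠ ⊥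

end Hull


section PDegree

/-- The degree `[k : k^p]` of the residue field of a local ring `R` over its subfield of `p`-th
powers, computed as the rank of `k^{1/p}` over `k`;  `α(R) = log_p [k : k^p]`. -/
noncomputable def residueFieldPDegree (R : Type u) [CommRing R] [IsLocalRing R] (p : ℕ)
    [Fact p.Prime] [CharP R p] : ℕ :=
  Module.finrank (ResidueField R) (FrobTwist (ResidueField R) p 1)

end PDegree



section ArtinianAux
variable {R : Type u} [CommRing R]

def promoteSubmodule (I : Ideal R) {X : Type u} [AddCommGroup X] [Module R X]
    [Module (R ⧸ I) X] [IsScalarTower R (R ⧸ I) X] (W : Submodule R X) :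
    Submodule (R ⧸ I) X where
  carrier := W
  zero_mem' := W.zero_mem
  add_mem' := W.add_mem
  smul_mem' := by
    rintro c x hx
    obtain ⟨r, rfl⟩ := Ideal.Quotient.mk_surjective c
    have : (Ideal.Quotient.mk I r) • x = r • x := by
      rw [← Ideal.Quotient.algebraMap_eq, algebraMap_smul]
    rw [this]
    exact W.smul_mem r hx

lemma isArtinian_of_quotient_action (I : Ideal R) {X : Type u} [AddCommGroup X] [Module R X]
    [Module (R ⧸ I) X] [IsScalarTower R (R ⧸ I) X] (h : IsArtinian (R ⧸ I) X) :
    IsArtinian R X := by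
  constructor
  refine Subrelation.wf (r := InvImage (· < ·) (promoteSubmodule I)) ?_ (InvImage.wf _ h.wf)
  intro A B hAB
  have h1 : promoteSubmodule I A ≤ promoteSubmodule I B := fun x hx => hAB.le hx
  refine lt_of_le_of_ne h1 fun he => hAB.ne (by ext x; exact SetLike.ext_iff.mp he x)

variable [IsNoetherianRing R] [IsLocalRing R]

open IsLocalRing

lemma isArtinian_of_pow_smul_top_eq_bot (n : ℕ) :
    ∀ (M : Type u) [AddCommGroup M] [Module R M] [Module.Finite R M],
    (maximalIdeal R) ^ n • (⊤ : Submodule R M) = ⊥ → IsArtinian R M := by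
  induction n with
  | zero =>
    intro M _ _ _ h
    rw [pow_zero, Ideal.one_eq_top, Submodule.top_smul] at h
    have : Subsingleton M := by
      constructor
      intro a b
      have ha : a ∈ (⊥ : Submodule R M) := h ▸ Submodule.mem_top
      have hb : b ∈ (⊥ : Submodule R M) := h ▸ Submodule.mem_top
      rw [Submodule.mem_bot] at ha hb
      rw [ha, hb]
    exact isArtinian_of_finite
  | succ n ih =>
    intro M _ _ _ h
    set N : Submodule R M := (maximalIdeal R) • ⊤ with hN
    -- N is Artinian
    haveI : IsNoetherian R M := isNoetherian_of_isNoetherianRing_of_finite R M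
    haveI : Module.Finite R N := Module.Finite.iff_fg.mpr (IsNoetherian.noetherian N)
    have hNart : IsArtinian R N := by
      apply ih N
      apply Submodule.map_injective_of_injective (N.injective_subtype)
      rw [Submodule.map_smul'', Submodule.map_top, Submodule.range_subtype, Submodule.map_bot,
        hN, ← Submodule.smul_assoc, Ideal.smul_eq_mul, ← pow_succ]
      exact h
    -- M ⧸ N is Artinian
    have htor : Module.IsTorsionBySet R (M ⧸ N) (maximalIdeal R : Set R) := by
      intro x ⟨r, hr⟩
      obtain ⟨y, rfl⟩ := Submodule.Quotient.mk_surjective N x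
      show r • Submodule.Quotient.mk y = 0
      rw [← Submodule.Quotient.mk_smul, Submodule.Quotient.mk_eq_zero]
      exact Submodule.smul_mem_smul hr Submodule.mem_top
    letI instk : Module (R ⧸ maximalIdeal R) (M ⧸ N) := htor.module
    haveI : IsScalarTower R (R ⧸ maximalIdeal R) (M ⧸ N) := htor.isScalarTower
    haveI instfin : Module.Finite (R ⧸ maximalIdeal R) (M ⧸ N) :=
      Module.Finite.of_restrictScalars_finite R _ _
    have hbt : ∀ J : Ideal (R ⧸ maximalIdeal R), J = ⊥ ∨ J = ⊤ := by
      intro J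
      rcases eq_or_ne J ⊥ with h | h
      · exact Or.inl h
      · refine Or.inr ?_
        obtain ⟨x, hxJ, hx0⟩ := Submodule.exists_mem_ne_zero_of_ne_bot h
        obtain ⟨r, rfl⟩ := Ideal.Quotient.mk_surjective x
        have hrm : r ∉ maximalIdeal R := fun hr => hx0 (Ideal.Quotient.eq_zero_iff_mem.mpr hr)
        have : IsUnit r := by
          by_contra hu
          exact hrm (IsLocalRing.mem_maximalIdeal r |>.mpr hu)
        exact Ideal.eq_top_of_isUnit_mem J hxJ (this.map (Ideal.Quotient.mk (maximalIdeal R)))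
    haveI hartring : IsArtinianRing (R ⧸ maximalIdeal R) := by
      constructor
      have accbot : Acc (· < ·) (⊥ : Ideal (R ⧸ maximalIdeal R)) :=
        Acc.intro _ (fun y hy => absurd hy (not_lt_bot))
      refine WellFounded.intro (fun J => Acc.intro J (fun y hy => ?_))
      rcases hbt y with rfl | rfl
      · exact accbot
      · exact absurd (lt_of_lt_of_le hy le_top) (lt_irrefl _)
    have hartk : @IsArtinian (R ⧸ maximalIdeal R) (M ⧸ N) _ _ instk := by
      apply isArtinian_of_fg_of_artinian'
    have hQart : IsArtinian R (M ⧸ N) :=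
      isArtinian_of_quotient_action (maximalIdeal R) hartk

    exact isArtinian_of_range_eq_ker N.subtype N.mkQ (N.range_subtype.trans N.ker_mkQ.symm)
section AKey

variable {A : Type u} [CommRing A] [IsLocalRing A]
open IsLocalRing

variable {u : A}

lemma AKey.unit_of_not_mem {r : A} (hr : r ∉ maximalIdeal A) : IsUnit r := by
  by_contra h
  exact hr ((IsLocalRing.mem_maximalIdeal r).mpr h)

lemma AKey.umul (hu0 : u ≠ 0) (hess : ∀ J : Ideal A, J ≠ ⊥ → u ∈ J)
    {c : A} (hc : c ∈ maximalIdeal A) : c * u = 0 := by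
  by_contra h
  have h1 : Ideal.span {c * u} ≠ ⊥ := by
    rw [Ne, Ideal.span_singleton_eq_bot]; exact h
  obtain ⟨r, hr⟩ := Ideal.mem_span_singleton'.mp (hess _ h1)
  -- hr : r * (c * u) = u
  have hrc : r * c ∈ maximalIdeal A := Ideal.mul_mem_left _ r hc
  have hunit : IsUnit (1 - r * c) := by
    apply AKey.unit_of_not_mem
    intro hmem
    have : (1 : A) ∈ maximalIdeal A := by
      have := Ideal.add_mem (maximalIdeal A) hmem hrc
      simpa using this
    exact (Ideal.IsMaximal.ne_top inferInstance) (Ideal.eq_top_of_isUnit_mem _ this isUnit_one)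
  have hz : (1 - r * c) * u = 0 := by linear_combination -hr
  exact hu0 ((IsUnit.mul_right_eq_zero hunit).mp hz)

lemma AKey.soc_mem (hu0 : u ≠ 0) (hess : ∀ J : Ideal A, J ≠ ⊥ → u ∈ J)
    {w : A} (hw : ∀ c ∈ maximalIdeal A, c * w = 0) (hw0 : w ≠ 0) :
    ∃ r : A, IsUnit r ∧ r * w = u := by
  have h1 : Ideal.span {w} ≠ ⊥ := by rw [Ne, Ideal.span_singleton_eq_bot]; exact hw0
  obtain ⟨r, hr⟩ := Ideal.mem_span_singleton'.mp (hess _ h1)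
  refine ⟨r, ?_, hr⟩
  by_contra h
  have hrm : r ∈ maximalIdeal A := (IsLocalRing.mem_maximalIdeal r).mpr h
  exact hu0 (hr ▸ hw r hrm)

lemma AKey.cov_step (hu0 : u ≠ 0) (hess : ∀ J : Ideal A, J ≠ ⊥ → u ∈ J)
    {W V : Ideal A} (h : W ⋖ V) :
    V.annihilator = W.annihilator ∨ V.annihilator ⋖ W.annihilator := by
  obtain ⟨x, hxV, hxW⟩ := SetLike.exists_of_lt h.lt
  have hxsp : Ideal.span {x} ≤ V := by rwa [Ideal.span_singleton_le_iff_mem]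
  have hV : W ⊔ Ideal.span {x} = V := by
    have hle : W ⊔ Ideal.span {x} ≤ V := sup_le h.lt.le hxsp
    have hlt : W < W ⊔ Ideal.span {x} :=
      lt_of_le_of_ne le_sup_left
        (fun he => hxW (he ▸ Submodule.mem_sup_right (Ideal.mem_span_singleton_self x)))
    exact (lt_or_eq_of_le hle).resolve_left (h.2 hlt)
  have hmx : ∀ c ∈ maximalIdeal A, c * x ∈ W := by
    intro c hc
    by_contra hcx
    have hlt : W < W ⊔ Ideal.span {c * x} :=
      lt_of_le_of_ne le_sup_left
        (fun he => hcx (he ▸ Submodule.mem_sup_right (Ideal.mem_span_singleton_self _)))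
    have hZV : W ⊔ Ideal.span {c * x} ≤ V := by
      refine sup_le h.lt.le ?_
      rw [Ideal.span_singleton_le_iff_mem]
      exact V.mul_mem_left c hxV
    have hZ : W ⊔ Ideal.span {c * x} = V := (lt_or_eq_of_le hZV).resolve_left (h.2 hlt)
    have hxZ : x ∈ W ⊔ Ideal.span {c * x} := hZ ▸ hxV
    obtain ⟨w, hw, z, hz, hwz⟩ := Submodule.mem_sup.mp hxZ
    obtain ⟨d, rfl⟩ := Ideal.mem_span_singleton'.mp hz
    have hdc : d * c ∈ maximalIdeal A := Ideal.mul_mem_left _ d hc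
    have hunit : IsUnit (1 - d * c) := by
      apply AKey.unit_of_not_mem
      intro hmem'
      have h1 : (1 : A) ∈ maximalIdeal A := by
        have := Ideal.add_mem (maximalIdeal A) hmem' hdc
        simpa using this
      exact (Ideal.IsMaximal.ne_top inferInstance)
        (Ideal.eq_top_of_isUnit_mem _ h1 isUnit_one)
    have hne : (1 - d * c) * x = w := by linear_combination -hwz
    exact hxW ((Ideal.unit_mul_mem_iff_mem W hunit).mp (hne ▸ hw))
  rcases eq_or_ne V.annihilator W.annihilator with heq | hne
  · exact Or.inl heq
  · right
    have hVW : V.annihilator ≤ W.annihilator := Submodule.annihilator_mono h.lt.le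
    have key : ∀ s, s ∈ W.annihilator → s ∉ V.annihilator →
        ∃ r, IsUnit r ∧ r * (s * x) = u := by
      intro s hsW hsV
      have hsx : s * x ≠ 0 := by
        intro h0
        apply hsV
        rw [Submodule.mem_annihilator]
        intro v hv
        rw [← hV] at hv
        obtain ⟨w, hw, zz, hzz, rfl⟩ := Submodule.mem_sup.mp hv
        obtain ⟨r, rfl⟩ := Ideal.mem_span_singleton'.mp hzz
        have e1 := Submodule.mem_annihilator.mp hsW w hw
        rw [smul_eq_mul] at e1 ⊢
        linear_combination e1 + r * h0
      have hsoc : ∀ c ∈ maximalIdeal A, c * (s * x) = 0 := by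
        intro c hc
        have e1 := Submodule.mem_annihilator.mp hsW (c * x) (hmx c hc)
        rw [smul_eq_mul] at e1
        linear_combination e1
      exact AKey.soc_mem hu0 hess hsoc hsx
    refine ⟨lt_of_le_of_ne hVW hne, fun Z h1 h2 => ?_⟩
    obtain ⟨z, hzZ, hzV⟩ := SetLike.exists_of_lt h1
    obtain ⟨t, htW, htZ⟩ := SetLike.exists_of_lt h2
    have hzW : z ∈ W.annihilator := h2.le hzZ
    have htV : t ∉ V.annihilator := fun hc => htZ (h1.le hc)
    obtain ⟨rz, hrz, hz2⟩ := key z hzW hzV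
    obtain ⟨rt, hrt, ht2⟩ := key t htW htV
    have hdiff : rt * t - rz * z ∈ V.annihilator := by
      rw [Submodule.mem_annihilator]
      intro v hv
      rw [← hV] at hv
      obtain ⟨w, hw, zz, hzz, rfl⟩ := Submodule.mem_sup.mp hv
      obtain ⟨r, rfl⟩ := Ideal.mem_span_singleton'.mp hzz
      have e1 := Submodule.mem_annihilator.mp htW w hw
      have e2 := Submodule.mem_annihilator.mp hzW w hw
      rw [smul_eq_mul] at e1 e2 ⊢
      linear_combination rt * e1 - rz * e2 + r * ht2 - r * hz2
    have hmem : rt * t ∈ Z := by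
      have he : rt * t = (rt * t - rz * z) + rz * z := by ring
      rw [he]
      exact Z.add_mem (h1.le hdiff) (Z.mul_mem_left rz hzZ)
    exact htZ ((Ideal.unit_mul_mem_iff_mem Z hrt).mp hmem)

lemma AKey.le_annann (J : Ideal A) : J ≤ J.annihilator.annihilator := by
  intro x hx
  rw [Submodule.mem_annihilator]
  intro r hr
  rw [smul_eq_mul, mul_comm, ← smul_eq_mul]
  exact Submodule.mem_annihilator.mp hr x hx

lemma AKey.annann [IsNoetherianRing A] [IsArtinianRing A]
    (hu0 : u ≠ 0) (hess : ∀ J : Ideal A, J ≠ ⊥ → u ∈ J) (J : Ideal A) :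
    J.annihilator.annihilator = J := by
  induction J using WellFoundedLT.induction with
  | _ J IH =>
  rcases eq_or_ne J ⊥ with rfl | hJ
  · rw [Submodule.annihilator_bot, eq_bot_iff]
    intro r hr
    have h1 := Submodule.mem_annihilator.mp hr 1 Submodule.mem_top
    rw [smul_eq_mul, mul_one] at h1
    simpa using h1
  · have hne : {K : Ideal A | K < J}.Nonempty := ⟨⊥, bot_lt_iff_ne_bot.mpr hJ⟩
    obtain ⟨K, hKJ, hKmax⟩ :=
      (set_has_maximal_iff_noetherian.mpr inferInstance) {K : Ideal A | K < J} hne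
    have hcov : K ⋖ J := ⟨hKJ, fun Z hZ1 hZ2 => hKmax Z hZ2 hZ1⟩
    have hK := IH K hKJ
    have hle : J ≤ J.annihilator.annihilator := AKey.le_annann J
    have hann_ne : J.annihilator ≠ K.annihilator := by
      intro he
      have : J ≤ K := by rw [← hK, ← he]; exact hle
      exact hKJ.not_ge this
    have hcov2 : J.annihilator ⋖ K.annihilator :=
      (AKey.cov_step hu0 hess hcov).resolve_left hann_ne
    rcases AKey.cov_step hu0 hess hcov2 with he | hcv
    · exfalso
      rw [hK] at he
      exact hKJ.not_ge (he ▸ hle)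
    · rw [hK] at hcv
      exact ((hle.lt_or_eq).resolve_left (hcv.2 hKJ)).symm

lemma AKey.ann_sup (J K : Ideal A) :
    (J ⊔ K).annihilator = J.annihilator ⊓ K.annihilator := by
  apply le_antisymm
  · exact le_inf (Submodule.annihilator_mono le_sup_left)
      (Submodule.annihilator_mono le_sup_right)
  · intro r hr
    rw [Submodule.mem_annihilator]
    intro n hn
    obtain ⟨y, hy, z, hz, rfl⟩ := Submodule.mem_sup.mp hn
    have e1 := Submodule.mem_annihilator.mp hr.1 y hy
    have e2 := Submodule.mem_annihilator.mp hr.2 z hz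
    rw [smul_add, e1, e2, add_zero]

lemma AKey.ann_inf [IsNoetherianRing A] [IsArtinianRing A]
    (hu0 : u ≠ 0) (hess : ∀ J : Ideal A, J ≠ ⊥ → u ∈ J) (J K : Ideal A) :
    (J ⊓ K).annihilator = J.annihilator ⊔ K.annihilator := by
  have h1 : (J.annihilator ⊔ K.annihilator).annihilator = J ⊓ K := by
    rw [AKey.ann_sup, AKey.annann hu0 hess J, AKey.annann hu0 hess K]
  calc (J ⊓ K).annihilator
      = ((J.annihilator ⊔ K.annihilator).annihilator).annihilator := by rw [h1]
    _ = J.annihilator ⊔ K.annihilator := AKey.annann hu0 hess _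

theorem AKey.baer [IsNoetherianRing A] [IsArtinianRing A]
    (hu0 : u ≠ 0) (hess : ∀ J : Ideal A, J ≠ ⊥ → u ∈ J) : Module.Baer A A := by
  intro J g
  have main : ∀ N : Submodule A A, N.FG →
      ∀ g : N →ₗ[A] A, ∃ c, ∀ x (hx : x ∈ N), g ⟨x, hx⟩ = x * c := by
    intro N hN
    refine Submodule.fg_induction (motive := fun N _ => ∀ g : N →ₗ[A] A, ∃ c, ∀ x (hx : x ∈ N), g ⟨x, hx⟩ = x * c) ?_ ?_ N hN
    · intro b g
      set c' := g ⟨b, Submodule.mem_span_singleton_self b⟩ with hc'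
      have hann : (Submodule.span A {b}).annihilator ≤
          (Submodule.span A {c'}).annihilator := by
        intro r hr
        have hrb : r • b = 0 := Submodule.mem_annihilator.mp hr b
          (Submodule.mem_span_singleton_self b)
        have hrc : r • c' = 0 := by
          have hsub : r • (⟨b, Submodule.mem_span_singleton_self b⟩ :
              Submodule.span A {b}) = 0 := by
            apply Subtype.ext
            simpa using hrb
          rw [hc', ← map_smul, hsub, map_zero]
        rw [Submodule.mem_annihilator]
        intro n hn
        obtain ⟨d, rfl⟩ := Submodule.mem_span_singleton.mp hn
        rw [smul_comm, hrc, smul_zero]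
      have hc'mem : c' ∈ Submodule.span A {b} := by
        have h2 : Submodule.span A {c'} ≤ Submodule.span A {b} := by
          calc Submodule.span A {c'}
              ≤ (Submodule.span A {c'}).annihilator.annihilator :=
                AKey.le_annann _
            _ ≤ (Submodule.span A {b}).annihilator.annihilator := by
                exact Submodule.annihilator_mono hann
            _ = Submodule.span A {b} := AKey.annann hu0 hess _
        exact h2 (Submodule.mem_span_singleton_self c')
      obtain ⟨d, hd⟩ := Ideal.mem_span_singleton'.mp hc'mem
      refine ⟨d, fun x hx => ?_⟩
      obtain ⟨r, hr⟩ := Ideal.mem_span_singleton'.mp hx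
      have hsub : (⟨x, hx⟩ : Submodule.span A {b}) =
          r • ⟨b, Submodule.mem_span_singleton_self b⟩ := by
        apply Subtype.ext
        simp [smul_eq_mul, hr]
      rw [hsub, map_smul, ← hc', smul_eq_mul, ← hd, ← hr]
      ring
    · intro N1 N2 _ _ ih1 ih2 g
      obtain ⟨c1, h1⟩ := ih1 (g.comp (Submodule.inclusion le_sup_left))
      obtain ⟨c2, h2⟩ := ih2 (g.comp (Submodule.inclusion le_sup_right))
      have hd : c1 - c2 ∈ (N1 ⊓ N2).annihilator := by
        rw [Submodule.mem_annihilator]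
        intro n hn
        have e1 := h1 n hn.1
        have e2 := h2 n hn.2
        rw [LinearMap.comp_apply] at e1 e2
        have heq : (Submodule.inclusion (le_sup_left : N1 ≤ N1 ⊔ N2)) ⟨n, hn.1⟩ =
            (Submodule.inclusion (le_sup_right : N2 ≤ N1 ⊔ N2)) ⟨n, hn.2⟩ :=
          Subtype.ext rfl
        rw [heq, e2] at e1
        rw [smul_eq_mul]
        linear_combination -e1
      rw [AKey.ann_inf hu0 hess] at hd
      obtain ⟨a, ha, b, hb, hsum⟩ := Submodule.mem_sup.mp hd
      refine ⟨c1 - a, fun x hx => ?_⟩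
      obtain ⟨y, hy, z, hz, hyz⟩ := Submodule.mem_sup.mp hx
      have hxe : (⟨x, hx⟩ : (N1 ⊔ N2 : Submodule A A)) =
          (Submodule.inclusion (le_sup_left : N1 ≤ N1 ⊔ N2)) ⟨y, hy⟩ +
          (Submodule.inclusion (le_sup_right : N2 ≤ N1 ⊔ N2)) ⟨z, hz⟩ := by
        apply Subtype.ext
        simpa using hyz.symm
      have e1 := h1 y hy
      have e2 := h2 z hz
      rw [LinearMap.comp_apply] at e1 e2
      rw [hxe, map_add, e1, e2]
      have hay : a * y = 0 := by
        have := Submodule.mem_annihilator.mp ha y hy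
        rwa [smul_eq_mul] at this
      have hbz : b * z = 0 := by
        have := Submodule.mem_annihilator.mp hb z hz
        rwa [smul_eq_mul] at this
      linear_combination z * hsum + (c1 - a) * hyz + hay - hbz
  obtain ⟨c, hc⟩ := main J (IsNoetherian.noetherian J) g
  refine ⟨LinearMap.toSpanSingleton A A c, fun x hx => ?_⟩
  rw [LinearMap.toSpanSingleton_apply, smul_eq_mul, hc x hx]

end AKey

section MainAux

variable {R : Type u} [CommRing R] [IsLocalRing R]
open IsLocalRing

lemma MainAux.contains_u {I : Ideal R} (hirr : ∀ J K : Ideal R, I = J ⊓ K → I = J ∨ I = K)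
    {u : R} (huI : u ∉ I) (hum : ∀ c ∈ maximalIdeal R, u * c ∈ I)
    {J : Ideal R} (hIJ : I < J) : u ∈ J := by
  by_contra huJ
  have heq : I = J ⊓ (I ⊔ Ideal.span {u}) := by
    apply le_antisymm (le_inf hIJ.le le_sup_left)
    rintro r ⟨hrJ, hr2⟩
    obtain ⟨a, haI, s, hs, rfl⟩ := Submodule.mem_sup.mp hr2
    obtain ⟨b, rfl⟩ := Ideal.mem_span_singleton'.mp hs
    have hbu : b * u ∈ J := by
      have : b * u = (a + b * u) - a := by ring
      rw [this]
      exact J.sub_mem hrJ (hIJ.le haI)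
    have hbm : b ∈ maximalIdeal R := by
      by_contra hb
      exact huJ ((Ideal.unit_mul_mem_iff_mem J (AKey.unit_of_not_mem hb)).mp hbu)
    have : b * u ∈ I := by rw [mul_comm]; exact hum b hbm
    exact Ideal.add_mem I haI this
  rcases hirr _ _ heq with h | h
  · exact hIJ.ne h
  · apply huI
    rw [h]
    exact Submodule.mem_sup_right (Ideal.mem_span_singleton_self u)

end MainAux

lemma MainAux.pi_single_expand {R : Type u} [CommRing R] {n : ℕ} (w : Fin n → R) :
    ∑ i, w i • (Pi.single i 1 : Fin n → R) = w := by
  ext j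
  rw [Finset.sum_apply]
  simp [Pi.single_apply, mul_ite, Finset.sum_ite_eq]


/-- **Aberbach–Leuschke, Proposition 1.6.**  Let `(R, m)` be an approximately Gorenstein
Noetherian local ring with a sequence `{I_t}` of `m`-primary irreducible ideals cofinal with
the powers of `m`, injections `R/I_t → R/I_{t+1}` (multiplication by `x_t`) sending socle
generator to socle generator, and `u_t` a representative of a socle generator of `R/I_t`.
If `M` is a finitely generated `R`-module with no nonzero free direct summand, then there is
`t₀ > 0` with `u_t M ⊆ I_t M` for all `t ≥ t₀`. -/
theorem socle_mult_into_of_noFreeSummand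
    (R : Type u) [CommRing R] [IsLocalRing R] [IsNoetherianRing R]
    (hAG : IsApproximatelyGorenstein R)
    (I : ℕ → Ideal R)
    (hprim : ∀ t, (I t).radical = maximalIdeal R)
    (hirr : ∀ t, IsIrreducibleIdeal (I t))
    (hcof : ∀ n : ℕ, ∃ t₀, ∀ t ≥ t₀, I t ≤ maximalIdeal R ^ n)
    (u : ℕ → R)
    (husoc : ∀ t, u t ∉ I t ∧
      Submodule.colon (I t) (maximalIdeal R) = I t ⊔ Ideal.span {u t})
    (x : ℕ → R)
    (hinj : ∀ t, ∀ r : R, r ∈ I t ↔ r * x t ∈ I (t + 1))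
    (hu : ∀ t, u (t + 1) - x t * u t ∈ I (t + 1))
    (M : Type u) [AddCommGroup M] [Module R M] [Module.Finite R M]
    (hM : NoFreeSummand R M) :
    ∃ t₀ > 0, ∀ t ≥ t₀, ∀ y : M, u t • y ∈ I t • (⊤ : Submodule R M) := by
  have hirr : ∀ t, ∀ J K : Ideal R, I t = J ⊓ K → I t = J ∨ I t = K := hirr
  by_contra hcon
  push_neg at hcon
  -- basic facts
  have hmtop : maximalIdeal R ≠ ⊤ := Ideal.IsMaximal.ne_top inferInstance
  have hItop : ∀ t, I t ≠ ⊤ := by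
    intro t ht
    exact hmtop ((hprim t).symm.trans (by rw [ht]; exact Ideal.radical_top R))
  have hum : ∀ t, ∀ c ∈ maximalIdeal R, u t * c ∈ I t := by
    intro t c hc
    have h1 : u t ∈ Submodule.colon (I t) (maximalIdeal R) := by
      rw [(husoc t).2]
      exact Submodule.mem_sup_right (Ideal.mem_span_singleton_self _)
    have := Submodule.mem_colon.mp h1 c hc
    rwa [smul_eq_mul] at this
  have hmn : ∀ t, ∃ n, maximalIdeal R ^ n ≤ I t := by
    intro t
    obtain ⟨n, hn⟩ := Ideal.exists_radical_pow_le_of_fg (I t)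
      (by rw [hprim t]; exact IsNoetherian.noetherian _)
    exact ⟨n, by rwa [hprim t] at hn⟩
  haveI : IsNoetherian R M := isNoetherian_of_isNoetherianRing_of_finite R M
  -- the increasing chain
  set B : ℕ → Submodule R M :=
    fun t => (I t • (⊤ : Submodule R M)).comap (LinearMap.lsmul R M (u t)) with hB
  have hBmem : ∀ t (y : M), y ∈ B t ↔ u t • y ∈ I t • (⊤ : Submodule R M) := by
    intro t y; rw [hB]; exact Iff.rfl
  have hmono : Monotone B := by
    apply monotone_nat_of_le_succ
    intro t y hy
    rw [hBmem] at hy ⊢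
    have h1 : (u (t + 1) - x t * u t) • y ∈ I (t + 1) • (⊤ : Submodule R M) :=
      Submodule.smul_mem_smul (hu t) Submodule.mem_top
    have h2 : (x t * u t) • y ∈ I (t + 1) • (⊤ : Submodule R M) := by
      rw [mul_smul]
      refine Submodule.smul_induction_on hy ?_ ?_
      · intro r hr m _
        rw [smul_smul, mul_comm]
        exact Submodule.smul_mem_smul ((hinj t r).mp hr) Submodule.mem_top
      · intro a b ha hb
        rw [smul_add]
        exact Submodule.add_mem _ ha hb
    have := Submodule.add_mem _ h1 h2
    rwa [← add_smul, sub_add_cancel] at this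
  obtain ⟨T, hT⟩ := monotone_stabilizes_iff_noetherian.mpr inferInstance ⟨B, hmono⟩
  obtain ⟨t1, ht1ge, y₀, hy₀⟩ := hcon (T + 1) (Nat.succ_pos T)
  have hy₀B : y₀ ∉ B t1 := fun h => hy₀ ((hBmem t1 y₀).mp h)
  have hy₀all : ∀ t, u t • y₀ ∉ I t • (⊤ : Submodule R M) := by
    intro t hmem
    have hyB : y₀ ∈ B t := (hBmem t y₀).mpr hmem
    rcases le_or_gt t t1 with h | h
    · exact hy₀B (hmono h hyB)
    · have hTt1 : T ≤ t1 := le_trans (Nat.le_succ T) ht1ge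
      have e1 : B T = B t1 := hT t1 hTt1
      have e2 : B T = B t := hT t (le_trans hTt1 h.le)
      exact hy₀B (e1 ▸ e2 ▸ hyB)
  -- injectivity on scalars
  have hinjmod : ∀ t (r : R), r • y₀ ∈ I t • (⊤ : Submodule R M) → r ∈ I t := by
    intro t r hr
    by_contra hrI
    have hIJ : I t < I t ⊔ Ideal.span {r} :=
      lt_of_le_of_ne le_sup_left
        (fun he => hrI (he ▸ Submodule.mem_sup_right (Ideal.mem_span_singleton_self r)))
    have humem : u t ∈ I t ⊔ Ideal.span {r} :=
      MainAux.contains_u (hirr t) (husoc t).1 (hum t) hIJ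
    obtain ⟨a, haI, s, hs, hasum⟩ := Submodule.mem_sup.mp humem
    obtain ⟨b, rfl⟩ := Ideal.mem_span_singleton'.mp hs
    apply hy₀all t
    have : u t • y₀ = a • y₀ + b • (r • y₀) := by
      rw [← hasum, add_smul, mul_smul]
    rw [this]
    exact Submodule.add_mem _ (Submodule.smul_mem_smul haI Submodule.mem_top)
      (Submodule.smul_mem _ b hr)
  -- for each t, a map M → R ⧸ I t sending y₀ to 1
  have hmap : ∀ t, ∃ h : M →ₗ[R] (R ⧸ I t), h y₀ = 1 := by
    intro t
    haveI hnt : Nontrivial (R ⧸ I t) := Ideal.Quotient.nontrivial_iff.mpr (hItop t)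
    haveI : IsLocalRing (R ⧸ I t) :=
      IsLocalRing.of_surjective' (Ideal.Quotient.mk (I t)) Ideal.Quotient.mk_surjective
    haveI : IsNoetherianRing (R ⧸ I t) := Ideal.Quotient.isNoetherianRing (I t)
    -- Artinian
    obtain ⟨n, hn⟩ := hmn t
    have hart : IsArtinian R (R ⧸ I t) := by
      apply isArtinian_of_pow_smul_top_eq_bot (R := R) n (R ⧸ I t)
      rw [eq_bot_iff]
      intro z hz
      refine Submodule.smul_induction_on hz ?_ ?_
      · intro r hr m _
        obtain ⟨m', rfl⟩ := Ideal.Quotient.mk_surjective m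
        have : r • (Ideal.Quotient.mk (I t) m') = Ideal.Quotient.mk (I t) (r * m') := rfl
        rw [this, Submodule.mem_bot, Ideal.Quotient.eq_zero_iff_mem]
        exact (I t).mul_mem_right m' (hn hr)
      · intro a b ha hb
        rw [Submodule.mem_bot] at ha hb ⊢
        rw [ha, hb, add_zero]
    haveI : IsArtinianRing (R ⧸ I t) := isArtinian_of_tower R hart
    -- socle generator facts
    have hu0 : (Ideal.Quotient.mk (I t) (u t)) ≠ 0 := by
      rw [Ne, Ideal.Quotient.eq_zero_iff_mem]
      exact (husoc t).1
    have hess : ∀ J : Ideal (R ⧸ I t), J ≠ ⊥ → Ideal.Quotient.mk (I t) (u t) ∈ J := by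
      intro J hJ
      have hIle : I t ≤ J.comap (Ideal.Quotient.mk (I t)) := by
        intro z hz
        rw [Ideal.mem_comap, Ideal.Quotient.eq_zero_iff_mem.mpr hz]
        exact J.zero_mem
      have hlt : I t < J.comap (Ideal.Quotient.mk (I t)) := by
        refine lt_of_le_of_ne hIle (fun he => hJ ?_)
        rw [← Ideal.map_comap_of_surjective _ Ideal.Quotient.mk_surjective J, ← he,
          Ideal.map_quotient_self]
      exact MainAux.contains_u (hirr t) (husoc t).1 (hum t) hlt
    have hbaer := AKey.baer (u := Ideal.Quotient.mk (I t) (u t)) hu0 hess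
    haveI hinjA : Module.Injective (R ⧸ I t) (R ⧸ I t) := hbaer.injective
    -- module structure on M ⧸ I t • ⊤
    set N : Submodule R M := I t • ⊤ with hN
    have htor : Module.IsTorsionBySet R (M ⧸ N) (I t : Set R) := by
      rintro z ⟨r, hr⟩
      obtain ⟨y, rfl⟩ := Submodule.Quotient.mk_surjective N z
      show r • Submodule.Quotient.mk y = 0
      rw [← Submodule.Quotient.mk_smul, Submodule.Quotient.mk_eq_zero]
      exact Submodule.smul_mem_smul hr Submodule.mem_top
    letI instA : Module (R ⧸ I t) (M ⧸ N) := htor.module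
    haveI : IsScalarTower R (R ⧸ I t) (M ⧸ N) := htor.isScalarTower
    set ybar : M ⧸ N := Submodule.Quotient.mk y₀ with hybar
    set f : (R ⧸ I t) →ₗ[R ⧸ I t] (M ⧸ N) :=
      LinearMap.toSpanSingleton (R ⧸ I t) (M ⧸ N) ybar with hf
    have hfapp : ∀ r : R, f (Ideal.Quotient.mk (I t) r) = Submodule.Quotient.mk (r • y₀) := by
      intro r
      rw [hf, LinearMap.toSpanSingleton_apply]
      have h1 : (Ideal.Quotient.mk (I t) r) • ybar = r • ybar := htor.mk_smul r ybar
      rw [h1, hybar, ← Submodule.Quotient.mk_smul]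
    have hfinj : Function.Injective f := by
      rw [injective_iff_map_eq_zero]
      intro a ha
      obtain ⟨r, rfl⟩ := Ideal.Quotient.mk_surjective a
      rw [hfapp r, Submodule.Quotient.mk_eq_zero] at ha
      rw [Ideal.Quotient.eq_zero_iff_mem]
      exact hinjmod t r ha
    obtain ⟨g, hg⟩ := hinjA.out f hfinj LinearMap.id
    refine ⟨(g.restrictScalars R).comp N.mkQ, ?_⟩
    have h1 : N.mkQ y₀ = f 1 := by
      rw [show ((1 : R ⧸ I t)) = Ideal.Quotient.mk (I t) 1 from rfl, hfapp, one_smul]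
      rfl
    rw [LinearMap.comp_apply, LinearMap.restrictScalars_apply, h1, hg 1]
    rfl
  -- finite presentation data
  obtain ⟨n, π, hπ⟩ := Module.Finite.exists_fin' R M
  set L := LinearMap.ker π with hL
  obtain ⟨s, l, hl⟩ := Submodule.fg_iff_exists_fin_generating_family.mp (IsNoetherian.noetherian L)
  obtain ⟨yhat, hyhat⟩ := hπ y₀
  set dot : (Fin n → R) →ₗ[R] ((Fin s → R) × R) :=
    LinearMap.prod
      (LinearMap.pi (fun j => Fintype.linearCombination R (l j)))
      (Fintype.linearCombination R yhat) with hdot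
  set b : (Fin s → R) × R := (0, 1) with hb
  -- evaluation lemma
  have heval : ∀ t (h : M →ₗ[R] (R ⧸ I t)) (v : Fin n → R),
      (∀ i, Ideal.Quotient.mk (I t) (v i) = h (π (Pi.single i 1))) →
      ∀ w : Fin n → R, Ideal.Quotient.mk (I t) (∑ i, w i * v i) = h (π w) := by
    intro t h v hv w
    calc Ideal.Quotient.mk (I t) (∑ i, w i * v i)
        = (I t).mkQ (∑ i, w i • v i) := by simp only [smul_eq_mul]; rfl
      _ = ∑ i, w i • (I t).mkQ (v i) := by rw [map_sum]; simp only [map_smul]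
      _ = ∑ i, w i • h (π (Pi.single i 1)) :=
          Finset.sum_congr rfl (fun i _ => by
            rw [show (I t).mkQ (v i) = Ideal.Quotient.mk (I t) (v i) from rfl, hv i])
      _ = h (π (∑ i, w i • (Pi.single i 1 : Fin n → R))) := by
          rw [map_sum, map_sum]
          simp only [map_smul]
      _ = h (π w) := by rw [MainAux.pi_single_expand w]
  -- b is in the range of dot modulo every power of the maximal ideal
  have hbmem2 : ∀ k : ℕ, b ∈ LinearMap.range dot ⊔ ((maximalIdeal R ^ k) • ⊤) := by
    intro k
    obtain ⟨t₀, hIt⟩ := hcof k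
    have hIk : I t₀ ≤ maximalIdeal R ^ k := hIt t₀ le_rfl
    obtain ⟨h, hh⟩ := hmap t₀
    have hvex : ∀ i, ∃ r : R, Ideal.Quotient.mk (I t₀) r = h (π (Pi.single i 1)) :=
      fun i => Ideal.Quotient.mk_surjective _
    choose v hv using hvex
    have he := heval t₀ h v hv
    have h0 : ∀ j, (∑ i, (l j) i * v i) ∈ I t₀ := by
      intro j
      have hlj : π (l j) = 0 := by
        have : l j ∈ L := hl ▸ Submodule.subset_span ⟨j, rfl⟩
        exact this
      rw [← Ideal.Quotient.eq_zero_iff_mem, he (l j), hlj, map_zero]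
    have h1 : (∑ i, yhat i * v i) - 1 ∈ I t₀ := by
      have h2 := he yhat
      rw [hyhat, hh] at h2
      rwa [show (1 : R ⧸ I t₀) = Ideal.Quotient.mk (I t₀) 1 from rfl,
        Ideal.Quotient.mk_eq_mk_iff_sub_mem] at h2
    refine Submodule.mem_sup.mpr ⟨dot v, ⟨v, rfl⟩, b - dot v, ?_, by abel⟩
    -- compute the two components of b - dot v
    have hfst : ∀ j, (b - dot v).1 j ∈ maximalIdeal R ^ k := by
      intro j
      have : (dot v).1 j = ∑ i, v i • (l j) i := by
        rw [hdot]
        simp [Fintype.linearCombination_apply]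
      rw [Prod.fst_sub, hb]
      simp only [Pi.sub_apply, Pi.zero_apply, zero_sub]
      rw [this]
      refine neg_mem (hIk ?_)
      rw [show (∑ i, v i • (l j) i) = ∑ i, (l j) i * v i from
        Finset.sum_congr rfl (fun i _ => by rw [smul_eq_mul, mul_comm])]
      exact h0 j
    have hsnd : (b - dot v).2 ∈ maximalIdeal R ^ k := by
      have : (dot v).2 = ∑ i, v i • yhat i := by
        rw [hdot]
        simp [Fintype.linearCombination_apply]
      rw [Prod.snd_sub, hb, this]
      have h3 : (1 : R) - ∑ i, v i • yhat i = -((∑ i, yhat i * v i) - 1) := by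
        rw [show (∑ i, v i • yhat i) = ∑ i, yhat i * v i from
          Finset.sum_congr rfl (fun i _ => by rw [smul_eq_mul, mul_comm])]
        ring
      rw [h3]
      exact neg_mem (hIk h1)
    -- conclude membership in (maximalIdeal R ^ k) • ⊤
    set p : Fin s → R := (b - dot v).1 with hpdef
    set q : R := (b - dot v).2 with hqdef
    have hbdv : b - dot v = (p, q) := rfl
    rw [hbdv]
    have hp : ((p, (0:R)) : (Fin s → R) × R) =
        ∑ j, p j • ((Pi.single j 1 : Fin s → R), (0 : R)) := by
      apply Prod.ext
      · rw [Prod.fst_sum]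
        have : ∀ j, (p j • ((Pi.single j 1 : Fin s → R), (0 : R))).1 =
            p j • (Pi.single j 1 : Fin s → R) := fun j => rfl
        simp only [this]
        exact (MainAux.pi_single_expand p).symm
      · rw [Prod.snd_sum]
        simp
    have hq : (((0 : Fin s → R), q) : (Fin s → R) × R) = q • ((0 : Fin s → R), (1 : R)) := by
      rw [Prod.smul_mk, smul_zero, smul_eq_mul, mul_one]
    have hpq : ((p, q) : (Fin s → R) × R) = (p, 0) + (0, q) := by
      rw [Prod.mk_add_mk, add_zero, zero_add]
    rw [hpq, hp, hq]
    refine Submodule.add_mem _ (Submodule.sum_mem _ (fun j _ => ?_)) ?_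
    · exact Submodule.smul_mem_smul (hfst j) Submodule.mem_top
    · exact Submodule.smul_mem_smul hsnd Submodule.mem_top
  -- Krull intersection gives b ∈ range dot
  have hbr : b ∈ LinearMap.range dot := by
    haveI : Module.Finite R (((Fin s → R) × R) ⧸ LinearMap.range dot) :=
      Module.Finite.of_surjective (LinearMap.range dot).mkQ (Submodule.mkQ_surjective _)
    have hker : ∀ k : ℕ, (LinearMap.range dot).mkQ b ∈
        (maximalIdeal R)^k • (⊤ : Submodule R (((Fin s → R) × R) ⧸ LinearMap.range dot)) := by
      intro k
      obtain ⟨w, hw, z, hz, hwz⟩ := Submodule.mem_sup.mp (hbmem2 k)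
      have hmq : (LinearMap.range dot).mkQ b = (LinearMap.range dot).mkQ z := by
        rw [← hwz, map_add,
          show (LinearMap.range dot).mkQ w = 0 from (Submodule.Quotient.mk_eq_zero _).mpr hw,
          zero_add]
      rw [hmq]
      have h2 := Submodule.mem_map_of_mem (f := (LinearMap.range dot).mkQ) hz
      rw [Submodule.map_smul''] at h2
      exact (smul_mono_right _ (le_top) : _ ≤ (maximalIdeal R)^k • (⊤ : Submodule R (((Fin s → R) × R) ⧸ LinearMap.range dot))) h2
    have hiInf : (LinearMap.range dot).mkQ b ∈
        (⨅ k : ℕ, (maximalIdeal R)^k •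
          (⊤ : Submodule R (((Fin s → R) × R) ⧸ LinearMap.range dot))) :=
      Submodule.mem_iInf _ |>.mpr hker
    have hbot := Ideal.iInf_pow_smul_eq_bot_of_isLocalRing (I := maximalIdeal R)
      (M := ((Fin s → R) × R) ⧸ LinearMap.range dot) hmtop
    rw [hbot, Submodule.mem_bot] at hiInf
    rwa [← Submodule.Quotient.mk_eq_zero]
  obtain ⟨v, hv⟩ := hbr
  have hv1 : ∀ j, (∑ i, v i * (l j) i) = 0 := by
    intro j
    have h2 := congrArg (fun p => p.1 j) hv
    simpa [hdot, Fintype.linearCombination_apply, smul_eq_mul, hb] using h2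
  have hv2 : (∑ i, v i * yhat i) = 1 := by
    have h2 := congrArg Prod.snd hv
    simpa [hdot, Fintype.linearCombination_apply, smul_eq_mul, hb] using h2
  set ψ0 : (Fin n → R) →ₗ[R] R := Fintype.linearCombination R v with hψ0
  have hker : L ≤ LinearMap.ker ψ0 := by
    rw [← hl, Submodule.span_le]
    rintro _ ⟨j, rfl⟩
    rw [SetLike.mem_coe, LinearMap.mem_ker, hψ0, Fintype.linearCombination_apply]
    rw [show (∑ i, (l j) i • v i) = ∑ i, v i * (l j) i from
      Finset.sum_congr rfl (fun i _ => by rw [smul_eq_mul, mul_comm])]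
    exact hv1 j
  set e := π.quotKerEquivOfSurjective hπ with hetop
  set ψ : M →ₗ[R] R := (L.liftQ ψ0 hker).comp (e.symm : M →ₗ[R] (Fin n → R) ⧸ L) with hψ
  have hψy : ψ y₀ = 1 := by
    have he : e (Submodule.Quotient.mk yhat) = y₀ := by rw [← hyhat]; rfl
    have he2 : e.symm y₀ = Submodule.Quotient.mk yhat := by rw [LinearEquiv.symm_apply_eq, he]
    rw [hψ, LinearMap.comp_apply, LinearEquiv.coe_coe, he2, Submodule.liftQ_apply, hψ0,
      Fintype.linearCombination_apply]
    rw [show (∑ i, yhat i • v i) = ∑ i, v i * yhat i from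
      Finset.sum_congr rfl (fun i _ => by rw [smul_eq_mul, mul_comm])]
    exact hv2
  exact hM ⟨ψ, fun r => ⟨r • y₀, by rw [map_smul, hψy, smul_eq_mul, mul_one]⟩⟩
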